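/- Let 0 < δ < 1, let v = (1−δ) Σ_{t=0}^∞ δ^t v(0) M^t and ν = (1−δ) Σ_{t=0}^∞ δ^t ν(0) (M'')^t be the discounted mean distributions of the full and m-strategy reduced chains. Then the focal player's long-term payoff computed from the full chain equals that computed from the reduced chain: Σ_{h ∈ {C,D}^n} v_h s_h = Σ_{x_1,…,x_m} ( ν_{(C,x_1,…,x_m)} · a_{x_1+…+x_m} + ν_{(D,x_1,…,x_m)} · b_{x_1+…+x_m} ). -/

import Mathlib

open Finset Matrix
open scoped Classical

noncomputable section

/-- A memory-1 strategy: an initial cooperation probability `init` and conditional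
cooperation probabilities `cond A j`: the probability to cooperate in the next round
when one's own action in the current round was `A` (`true` = cooperate) and exactly
`j` co-players cooperated. -/
structure Mem1 where
  init : ℝ
  cond : Bool → ℕ → ℝ

/-- All entries of the strategy lie in `[0,1]`. -/
def Mem1.valid (p : Mem1) : Prop :=
  p.init ∈ Set.Icc (0:ℝ) 1 ∧ ∀ A j, p.cond A j ∈ Set.Icc (0:ℝ) 1

/-- A full state: the action of each of the `n` players (`true` = cooperate). -/
abbrev FullState (n : ℕ) := Fin n → Bool

/-- The number of cooperators `σ(h)` in a full state. -/
def nCoop {n : ℕ} (h : FullState n) : ℕ :=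
  (Finset.univ.filter fun i => h i = true).card

/-- The full transition matrix `M` on the `2^n` full states, given each player's
memory-1 strategy: `m_{h,h'} = ∏ i u_i`, where `u_i` is player `i`'s probability of
choosing action `h' i` given that in state `h` his action was `h i` and
`σ(h) - f(h i)` of his co-players cooperated. -/
def fullM {n : ℕ} (strat : Fin n → Mem1) : Matrix (FullState n) (FullState n) ℝ :=
  Matrix.of fun h h' => ∏ i,
    (if h' i then (strat i).cond (h i) (nCoop h - if h i then 1 else 0)
     else 1 - (strat i).cond (h i) (nCoop h - if h i then 1 else 0))

/-- The initial full-state distribution `v(0)`: each player cooperates independently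
with the initial probability of his own strategy, `v(0)_h = ∏ i |1 - f(A_i) - p^i_0|`. -/
def fullInit {n : ℕ} (strat : Fin n → Mem1) : FullState n → ℝ :=
  fun h => ∏ i, |1 - (if h i then (1:ℝ) else 0) - (strat i).init|

/-- Binomial transfer factor: for a block of `tot` co-players of one strategy of which
`x` cooperated in the last round, the probability that exactly `x'` of them cooperate
in the next round, where previous cooperators cooperate with probability `pc` and
previous defectors with probability `pd`:
`Σ_{j=0}^{x'} C(x,j) pc^j (1-pc)^{x-j} C(tot-x, x'-j) pd^{x'-j} (1-pd)^{(tot-x)-(x'-j)}`. -/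
def transfer (pc pd : ℝ) (x tot x' : ℕ) : ℝ :=
  ∑ j ∈ Finset.range (x' + 1),
    (x.choose j : ℝ) * pc ^ j * (1 - pc) ^ (x - j) *
    ((tot - x).choose (x' - j) : ℝ) * pd ^ (x' - j) * (1 - pd) ^ ((tot - x) - (x' - j))

/-- The discounted mean distribution `(1-δ) Σ_{t=0}^∞ δ^t (w₀ T^t)`. -/
def discMean {α : Type*} [Fintype α] [DecidableEq α]
    (δ : ℝ) (w0 : α → ℝ) (T : Matrix α α ℝ) : α → ℝ :=
  fun j => (1 - δ) * ∑' t : ℕ, δ ^ t * (w0 ᵥ* T ^ t) j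

/-- The focal player's one-round payoff in full state `h`: `a_{σ(h)-1}` if he
cooperates, `b_{σ(h)}` if he defects. -/
def focalPayoff {n : ℕ} (focal : Fin n) (a b : ℕ → ℝ) (h : FullState n) : ℝ :=
  if h focal then a (nCoop h - 1) else b (nCoop h)

/-- Strategy assignment for `m` strategies: player `i` uses strategy `ps (assign i)`. -/
def stratM {n m : ℕ} (ps : Fin m → Mem1) (assign : Fin n → Fin m) : Fin n → Mem1 :=
  fun i => ps (assign i)

/-- The clustered state space for `m` strategies: the focal action together with, for
each strategy index `i`, the number `x i ∈ {0,…,k_i}` of cooperators among the `k_i`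
co-players using strategy `i`. -/
abbrev RStateM {m : ℕ} (ks : Fin m → ℕ) := Bool × ((i : Fin m) → Fin (ks i + 1))

/-- The cluster `A_{A,x_1,…,x_m}`: full states in which the focal player plays `A` and,
for every `i`, exactly `x i` of the co-players using strategy `i` cooperate. -/
def clusterM {n m : ℕ} (focal : Fin n) (assign : Fin n → Fin m) (ks : Fin m → ℕ)
    (A : Bool) (x : (i : Fin m) → Fin (ks i + 1)) : Finset (FullState n) :=
  Finset.univ.filter fun h =>
    h focal = A ∧
    ∀ i, (Finset.univ.filter fun j => j ≠ focal ∧ assign j = i ∧ h j = true).card = (x i : ℕ)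

/-- The `m`-strategy reduced transition matrix `M''` on the `2 ∏ (k_i+1)` clustered
states, for a focal player using strategy `ps i0`. -/
def redMM {m : ℕ} (ps : Fin m → Mem1) (ks : Fin m → ℕ) (i0 : Fin m) :
    Matrix (RStateM ks) (RStateM ks) ℝ :=
  Matrix.of fun s s' =>
    match s, s' with
    | (A, x), (A', x') =>
      |1 - (if A' then (1:ℝ) else 0) - (ps i0).cond A (∑ i, (x i : ℕ))| *
      ∏ i, transfer ((ps i).cond true ((∑ i', (x i' : ℕ)) + (if A then 1 else 0) - 1))
                    ((ps i).cond false ((∑ i', (x i' : ℕ)) + (if A then 1 else 0)))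
                    (x i : ℕ) (ks i) (x' i : ℕ)

/-- The initial clustered distribution `ν(0)` for `m` strategies. -/
def redInitM {m : ℕ} (ps : Fin m → Mem1) (ks : Fin m → ℕ) (i0 : Fin m) :
    RStateM ks → ℝ :=
  fun s => match s with
  | (A, x) =>
    |1 - (if A then (1:ℝ) else 0) - (ps i0).init| *
    ∏ i, (((ks i).choose (x i : ℕ) : ℝ) * (ps i).init ^ (x i : ℕ) *
          (1 - (ps i).init) ^ (ks i - (x i : ℕ)))

lemma coeff_linear_pow (a b : ℝ) (nn k : ℕ) :
    ((Polynomial.C a + Polynomial.C b * Polynomial.X) ^ nn).coeff k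
      = (nn.choose k : ℝ) * b ^ k * a ^ (nn - k) := by
  rw [add_comm, add_pow, Polynomial.finset_sum_coeff]
  have hterm : ∀ j ∈ Finset.range (nn + 1),
      ((Polynomial.C b * Polynomial.X) ^ j * Polynomial.C a ^ (nn - j) * (nn.choose j : Polynomial ℝ)).coeff k
        = if j = k then (nn.choose k : ℝ) * b ^ k * a ^ (nn - k) else 0 := by
    intro j hj
    rw [mul_pow, ← Polynomial.C_pow, ← Polynomial.C_pow]
    have : Polynomial.C (b ^ j) * Polynomial.X ^ j * Polynomial.C (a ^ (nn - j)) * (nn.choose j : Polynomial ℝ)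
        = Polynomial.C (b ^ j * a ^ (nn - j) * (nn.choose j : ℝ)) * Polynomial.X ^ j := by
      rw [← Polynomial.C_eq_natCast, Polynomial.C_mul, Polynomial.C_mul]
      ring
    rw [this, Polynomial.coeff_C_mul, Polynomial.coeff_X_pow]
    by_cases hjk : j = k
    · subst hjk; simp; ring
    · simp [hjk, Ne.symm hjk]
  rw [Finset.sum_congr rfl hterm, Finset.sum_ite_eq' (Finset.range (nn + 1)) k]
  by_cases hk : k ∈ Finset.range (nn + 1)
  · simp [hk]
  · have h1 : nn < k := by
      have := Finset.mem_range.not.mp hk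
      omega
    simp [hk, Nat.choose_eq_zero_of_lt h1]


lemma sum_funs_coeff {β : Type*} [Fintype β] [DecidableEq β] (q : β → ℝ) (k : ℕ) :
    ∑ f : β → Bool, (if (Finset.univ.filter fun j => f j = true).card = k
        then ∏ j, (if f j then q j else 1 - q j) else 0)
      = (∏ j, (Polynomial.C (1 - q j) + Polynomial.C (q j) * Polynomial.X)).coeff k := by
  have hfac : ∀ j : β, Polynomial.C (1 - q j) + Polynomial.C (q j) * Polynomial.X
      = ∑ b : Bool, (if b then Polynomial.C (q j) * Polynomial.X else Polynomial.C (1 - q j)) := by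
    intro j; simp [Fintype.sum_bool]; ring
  rw [Finset.prod_congr rfl fun j _ => hfac j, Finset.prod_univ_sum, Fintype.piFinset_univ,
    Polynomial.finset_sum_coeff]
  refine Finset.sum_congr rfl fun f _ => ?_
  have hf : ∏ j, (if f j then Polynomial.C (q j) * Polynomial.X else Polynomial.C (1 - q j))
      = Polynomial.C (∏ j, if f j then q j else 1 - q j)
        * Polynomial.X ^ (Finset.univ.filter fun j => f j = true).card := by
    have h1 : ∀ j : β, (if f j then Polynomial.C (q j) * Polynomial.X else Polynomial.C (1 - q j))
        = Polynomial.C (if f j then q j else 1 - q j) * Polynomial.X ^ (if f j then 1 else 0) := by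
      intro j; by_cases hj : f j <;> simp [hj]
    rw [Finset.prod_congr rfl fun j _ => h1 j, Finset.prod_mul_distrib,
      Finset.prod_pow_eq_pow_sum, ← map_prod, Finset.card_filter]
  rw [hf, Polynomial.coeff_C_mul, Polynomial.coeff_X_pow]
  by_cases hc : (Finset.univ.filter fun j => f j = true).card = k
  · rw [if_pos hc, if_pos hc.symm, mul_one]
  · rw [if_neg hc, if_neg (fun h => hc h.symm), mul_zero]


lemma block_sum_transfer {β : Type*} [Fintype β] [DecidableEq β] (co : β → Bool) (pc pd : ℝ) (k : ℕ) :
    ∑ f : β → Bool, (if (Finset.univ.filter fun j => f j = true).card = k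
        then ∏ j, (if f j then (if co j then pc else pd) else 1 - (if co j then pc else pd)) else 0)
      = transfer pc pd (Finset.univ.filter fun j => co j = true).card (Fintype.card β) k := by
  rw [sum_funs_coeff (fun j => if co j then pc else pd)]
  set x := (Finset.univ.filter fun j => co j = true).card with hx
  have hxle : x ≤ Fintype.card β := by
    simpa [hx] using Finset.card_filter_le Finset.univ (fun j => co j = true)
  have hfac : ∀ j : β,
      (Polynomial.C (1 - if co j then pc else pd) + Polynomial.C (if co j then pc else pd) * Polynomial.X)
        = if co j then (Polynomial.C (1 - pc) + Polynomial.C pc * Polynomial.X)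
          else (Polynomial.C (1 - pd) + Polynomial.C pd * Polynomial.X) := by
    intro j; by_cases hj : co j <;> simp [hj]
  rw [Finset.prod_congr rfl fun j _ => hfac j, Finset.prod_ite _ _, Finset.prod_const,
    Finset.prod_const, ← hx]
  have hcard2 : (Finset.univ.filter fun j => ¬ (co j = true)).card = Fintype.card β - x := by
    have h3 := Finset.card_filter_add_card_filter_not (s := (Finset.univ : Finset β))
      (p := fun j => co j = true)
    rw [← hx, Finset.card_univ] at h3
    omega
  rw [hcard2, Polynomial.coeff_mul]
  refine (Finset.Nat.sum_antidiagonal_eq_sum_range_succ_mk _ k).trans ?_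
  unfold transfer
  refine Finset.sum_congr rfl fun j hj => ?_
  rw [coeff_linear_pow, coeff_linear_pow]
  ring

lemma block_sum_init {β : Type*} [Fintype β] [DecidableEq β] (p : ℝ) (k : ℕ) :
    ∑ f : β → Bool, (if (Finset.univ.filter fun j => f j = true).card = k
        then ∏ j, (if f j then p else 1 - p) else 0)
      = ((Fintype.card β).choose k : ℝ) * p ^ k * (1 - p) ^ (Fintype.card β - k) := by
  rw [sum_funs_coeff (fun _ => p), Finset.prod_const, Finset.card_univ, coeff_linear_pow]


section Aux

variable {n m : ℕ}

/-- The explicit splitting equivalence. -/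
def splitEq (focal : Fin n) (assign : Fin n → Fin m) :
    (Fin n → Bool) ≃ Bool × (∀ i : Fin m, ({j : {j : Fin n // j ≠ focal} // assign j.val = i} → Bool)) where
  toFun h := (h focal, fun _ j => h j.val.val)
  invFun p j := if hj : j = focal then p.1 else p.2 (assign j) ⟨⟨j, hj⟩, rfl⟩
  left_inv h := by
    funext j
    by_cases hj : j = focal
    · subst hj; simp
    · simp [hj]
  right_inv p := by
    obtain ⟨b, g⟩ := p
    refine Prod.ext ?_ ?_
    · simp
    · funext i j
      obtain ⟨⟨jv, hjne⟩, hji⟩ := j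
      dsimp
      rw [dif_neg hjne]
      subst hji
      rfl

lemma splitEq_symm_focal (focal : Fin n) (assign : Fin n → Fin m) (b) (g) :
    (splitEq focal assign).symm (b, g) focal = b := dif_pos rfl

lemma splitEq_symm_ne (focal : Fin n) (assign : Fin n → Fin m) (b) (g) {j : Fin n}
    (hj : ¬ j = focal) :
    (splitEq focal assign).symm (b, g) j = g (assign j) ⟨⟨j, hj⟩, rfl⟩ := dif_neg hj

lemma g_eval (focal : Fin n) (assign : Fin n → Fin m)
    (g : ∀ i : Fin m, ({j : {j : Fin n // j ≠ focal} // assign j.val = i} → Bool))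
    (i : Fin m) (jj : {j : {j : Fin n // j ≠ focal} // assign j.val = i}) :
    g (assign jj.val.val) ⟨jj.val, rfl⟩ = g i jj := by
  obtain ⟨⟨jv, hne⟩, hi⟩ := jj
  subst hi
  rfl

lemma cnt_splitEq (focal : Fin n) (assign : Fin n → Fin m) (b) (g) (i : Fin m) :
    (Finset.univ.filter fun j : Fin n =>
        j ≠ focal ∧ assign j = i ∧ (splitEq focal assign).symm (b, g) j = true).card
      = (Finset.univ.filter fun j : {j : {j : Fin n // j ≠ focal} // assign j.val = i} =>
          g i j = true).card := by
  apply Finset.card_bij (fun j hj => (⟨⟨j, (Finset.mem_filter.mp hj).2.1⟩,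
      (Finset.mem_filter.mp hj).2.2.1⟩ : {j : {j : Fin n // j ≠ focal} // assign j.val = i}))
  · intro j hj
    have h := Finset.mem_filter.mp hj
    rw [Finset.mem_filter]
    refine ⟨Finset.mem_univ _, ?_⟩
    have := h.2.2.2
    rw [splitEq_symm_ne focal assign b g h.2.1] at this
    rw [← g_eval focal assign g i ⟨⟨j, h.2.1⟩, h.2.2.1⟩]
    convert this using 2
  · intro j1 hj1 j2 hj2 heq
    have := congrArg (fun z => z.val.val) heq
    exact this
  · intro jj hjj
    refine ⟨jj.val.val, ?_, ?_⟩
    · rw [Finset.mem_filter]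
      refine ⟨Finset.mem_univ _, jj.val.prop, jj.prop, ?_⟩
      rw [splitEq_symm_ne focal assign b g jj.val.prop]
      have h2 := (Finset.mem_filter.mp hjj).2
      rw [← g_eval focal assign g i jj] at h2
      convert h2 using 2
    · apply Subtype.ext; apply Subtype.ext; rfl

lemma ite_and_forall_prod (P0 : Prop) (P : Fin m → Prop) [Decidable P0]
    [∀ i, Decidable (P i)] (c0 : ℝ) (c : Fin m → ℝ) :
    (if (P0 ∧ ∀ i, P i) then c0 * ∏ i, c i else 0)
      = (if P0 then c0 else 0) * ∏ i, (if P i then c i else 0) := by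
  by_cases h0 : P0
  · rw [if_pos h0]
    by_cases hall : ∀ i, P i
    · rw [if_pos ⟨h0, hall⟩, Finset.prod_congr rfl fun i _ => if_pos (hall i)]
    · rw [if_neg (fun hh => hall hh.2)]
      push_neg at hall
      obtain ⟨i, hi⟩ := hall
      rw [Finset.prod_eq_zero (Finset.mem_univ i) (if_neg hi : (if P i then c i else (0:ℝ)) = 0),
        mul_zero]
  · rw [if_neg (fun hh => h0 hh.1), if_neg h0, zero_mul]

/-- Key decomposition: a constrained sum over full states factorizes over blocks. -/
lemma decomp (focal : Fin n) (assign : Fin n → Fin m) (w : Fin n → Bool → ℝ)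
    (A' : Bool) (x' : Fin m → ℕ) :
    ∑ h' : Fin n → Bool, (if (h' focal = A' ∧ ∀ i,
          (Finset.univ.filter fun j => j ≠ focal ∧ assign j = i ∧ h' j = true).card = x' i)
        then ∏ j, w j (h' j) else 0)
      = w focal A' * ∏ i : Fin m,
          ∑ g : {j : {j : Fin n // j ≠ focal} // assign j.val = i} → Bool,
            (if (Finset.univ.filter fun j => g j = true).card = x' i
             then ∏ j, w j.val.val (g j) else 0) := by
  rw [← Equiv.sum_comp (splitEq focal assign).symm]
  have hsummand : ∀ p : Bool × (∀ i : Fin m, ({j : {j : Fin n // j ≠ focal} // assign j.val = i} → Bool)),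
      (if ((splitEq focal assign).symm p focal = A' ∧ ∀ i,
          (Finset.univ.filter fun j => j ≠ focal ∧ assign j = i ∧
            (splitEq focal assign).symm p j = true).card = x' i)
        then ∏ j, w j ((splitEq focal assign).symm p j) else 0)
      = (if p.1 = A' then w focal p.1 else 0) * ∏ i,
          (if (Finset.univ.filter fun j : {j : {j : Fin n // j ≠ focal} // assign j.val = i} =>
              p.2 i j = true).card = x' i
           then ∏ j : {j : {j : Fin n // j ≠ focal} // assign j.val = i}, w j.val.val (p.2 i j) else 0) := by
    intro ⟨b, g⟩
    have hprod : ∏ j, w j ((splitEq focal assign).symm (b, g) j)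
        = w focal b * ∏ i, ∏ j : {j : {j : Fin n // j ≠ focal} // assign j.val = i},
            w j.val.val (g i j) := by
      rw [← Finset.mul_prod_erase Finset.univ _ (Finset.mem_univ focal)]
      congr 1
      · rw [splitEq_symm_focal]
      · rw [Finset.prod_subtype (p := fun j : Fin n => j ≠ focal) (Finset.univ.erase focal)
          (fun j => by simp [Finset.mem_erase]) (fun j => w j ((splitEq focal assign).symm (b, g) j))]
        rw [← Fintype.prod_fiberwise (fun j : {j : Fin n // j ≠ focal} => assign j.val)
          (fun j => w j.val ((splitEq focal assign).symm (b, g) j.val))]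
        refine Finset.prod_congr rfl fun i _ => Finset.prod_congr rfl fun jj _ => ?_
        rw [splitEq_symm_ne focal assign b g jj.val.prop]
        congr 1
        exact g_eval focal assign g i jj
    rw [hprod]
    simp only [splitEq_symm_focal focal assign b g, cnt_splitEq focal assign b g]
    rw [ite_and_forall_prod (b = A') _ (w focal b)]
  rw [Finset.sum_congr rfl fun p _ => hsummand p]
  rw [Fintype.sum_prod_type]
  have : ∀ b : Bool, ∑ g : (∀ i : Fin m, ({j : {j : Fin n // j ≠ focal} // assign j.val = i} → Bool)),
      ((if b = A' then w focal b else 0) * ∏ i,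
        (if (Finset.univ.filter fun j : {j : {j : Fin n // j ≠ focal} // assign j.val = i} =>
            g i j = true).card = x' i
         then ∏ j : {j : {j : Fin n // j ≠ focal} // assign j.val = i}, w j.val.val (g i j) else 0))
      = (if b = A' then w focal b else 0) * ∏ i : Fin m,
          ∑ gi : {j : {j : Fin n // j ≠ focal} // assign j.val = i} → Bool,
            (if (Finset.univ.filter fun j => gi j = true).card = x' i
             then ∏ j, w j.val.val (gi j) else 0) := by
    intro b
    rw [← Finset.mul_sum]
    congr 1
    rw [Finset.prod_univ_sum (fun i => (Finset.univ : Finset ({j : {j : Fin n // j ≠ focal} // assign j.val = i} → Bool)))]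
    rw [Fintype.piFinset_univ]
  rw [Finset.sum_congr rfl fun b _ => this b, ← Finset.sum_mul, Finset.sum_ite_eq' Finset.univ A' (fun b => w focal b)]
  simp


end Aux
section Game

variable {n m : ℕ}

lemma card_blk_filter (focal : Fin n) (assign : Fin n → Fin m) (i : Fin m) (Q : Fin n → Prop) [DecidablePred Q] :
    (Finset.univ.filter fun j : {j : {j' : Fin n // j' ≠ focal} // assign j.val = i} =>
        Q j.val.val).card
      = (Finset.univ.filter fun j : Fin n => j ≠ focal ∧ assign j = i ∧ Q j).card := by
  apply Finset.card_bij (fun j _ => j.val.val)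
  · intro j hj
    rw [Finset.mem_filter] at hj ⊢
    exact ⟨Finset.mem_univ _, j.val.prop, j.prop, hj.2⟩
  · intro j1 _ j2 _ heq
    exact Subtype.ext (Subtype.ext heq)
  · intro j hj
    rw [Finset.mem_filter] at hj
    exact ⟨⟨⟨j, hj.2.1⟩, hj.2.2.1⟩, Finset.mem_filter.mpr ⟨Finset.mem_univ _, hj.2.2.2⟩, rfl⟩

lemma card_blk (focal : Fin n) (assign : Fin n → Fin m) (ks : Fin m → ℕ)
    (hcard : ∀ i, (Finset.univ.filter fun j => j ≠ focal ∧ assign j = i).card = ks i)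
    (i : Fin m) :
    Fintype.card {j : {j' : Fin n // j' ≠ focal} // assign j.val = i} = ks i := by
  have h1 := card_blk_filter focal assign i (fun _ => True)
  simp only [Finset.filter_true, and_true] at h1
  rw [← hcard i, ← h1, Finset.card_univ]

lemma nCoop_cluster (focal : Fin n) (assign : Fin n → Fin m) (ks : Fin m → ℕ)
    (A : Bool) (x : (i : Fin m) → Fin (ks i + 1)) (h : FullState n)
    (hh : h ∈ clusterM focal assign ks A x) :
    nCoop h = (∑ i, (x i : ℕ)) + (if A then 1 else 0) := by
  rw [clusterM, Finset.mem_filter] at hh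
  obtain ⟨-, hfA, hcnt⟩ := hh
  unfold nCoop
  rw [Finset.card_filter, ← Finset.add_sum_erase _ _ (Finset.mem_univ focal)]
  rw [← Finset.sum_fiberwise_of_maps_to (g := assign) (t := Finset.univ)
    (fun j _ => Finset.mem_univ (assign j)) (fun j => if h j = true then 1 else 0)]
  have hinner : ∀ i : Fin m, ∑ j ∈ (Finset.univ.erase focal).filter (fun j => assign j = i),
      (if h j = true then 1 else 0) = (x i : ℕ) := by
    intro i
    rw [← Finset.card_filter]
    rw [show ((Finset.univ.erase focal).filter (fun j => assign j = i)).filter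
        (fun j => h j = true)
      = Finset.univ.filter (fun j => j ≠ focal ∧ assign j = i ∧ h j = true) by
        ext j
        simp only [Finset.mem_filter, Finset.mem_erase, Finset.mem_univ, true_and, and_true]
        tauto]
    exact hcnt i
  rw [Finset.sum_congr rfl fun i _ => hinner i, hfA, add_comm]

end Game
section Game2

variable {n m : ℕ}

/-- Weight function for the initial distribution. -/
def initW (ps : Fin m → Mem1) (assign : Fin n → Fin m) (j : Fin n) (bb : Bool) : ℝ :=
  |1 - (if bb then (1:ℝ) else 0) - (stratM ps assign j).init|

/-- Weight function for a transition row out of state `h`. -/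
def rowW (ps : Fin m → Mem1) (assign : Fin n → Fin m) (h : FullState n)
    (j : Fin n) (bb : Bool) : ℝ :=
  if bb then (stratM ps assign j).cond (h j) (nCoop h - if h j then 1 else 0)
  else 1 - (stratM ps assign j).cond (h j) (nCoop h - if h j then 1 else 0)

lemma fullInit_eq_prod (ps : Fin m → Mem1) (assign : Fin n → Fin m) (h : FullState n) :
    fullInit (stratM ps assign) h = ∏ j, initW ps assign j (h j) := rfl

lemma fullM_eq_prod (ps : Fin m → Mem1) (assign : Fin n → Fin m) (h h' : FullState n) :
    fullM (stratM ps assign) h h' = ∏ j, rowW ps assign h j (h' j) := rfl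

set_option maxHeartbeats 1000000 in
lemma init_lump (ps : Fin m → Mem1) (hps : ∀ i, (ps i).valid) (ks : Fin m → ℕ) (i0 : Fin m)
    (focal : Fin n) (assign : Fin n → Fin m) (hassign : assign focal = i0)
    (hcard : ∀ i, (Finset.univ.filter fun j => j ≠ focal ∧ assign j = i).card = ks i)
    (A : Bool) (x : (i : Fin m) → Fin (ks i + 1)) :
    ∑ h ∈ clusterM focal assign ks A x, fullInit (stratM ps assign) h
      = redInitM ps ks i0 (A, x) := by
  rw [clusterM, Finset.sum_filter]
  rw [Finset.sum_congr rfl fun h _ => by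
    rw [show fullInit (stratM ps assign) h = ∏ j, initW ps assign j (h j) from rfl]]
  rw [decomp focal assign (initW ps assign) A (fun i => (x i : ℕ))]
  rw [redInitM]
  congr 1
  · rw [show initW ps assign focal A
        = |1 - (if A then (1:ℝ) else 0) - (ps (assign focal)).init| from rfl, hassign]
  · refine Finset.prod_congr rfl fun i _ => ?_
    have hblock : ∀ g : {j : {j' : Fin n // j' ≠ focal} // assign j.val = i} → Bool,
        ∀ jj, initW ps assign jj.val.val (g jj)
          = (if g jj then (ps i).init else 1 - (ps i).init) := by
      intro g jj
      rw [show initW ps assign jj.val.val (g jj)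
          = |1 - (if g jj then (1:ℝ) else 0) - (ps (assign jj.val.val)).init| from rfl, jj.prop]
      obtain ⟨h0, h1⟩ := (hps i).1
      by_cases hb : g jj
      · rw [if_pos hb, if_pos hb,
          show (1:ℝ) - 1 - (ps i).init = -((ps i).init) by ring, abs_neg, abs_of_nonneg h0]
      · rw [if_neg hb, if_neg hb,
          show (1:ℝ) - 0 - (ps i).init = 1 - (ps i).init by ring,
          abs_of_nonneg (by linarith)]
    rw [Finset.sum_congr rfl fun g _ => by
      rw [show (∏ jj, initW ps assign jj.val.val (g jj))
          = ∏ jj, (if g jj then (ps i).init else 1 - (ps i).init)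
        from Finset.prod_congr rfl fun jj _ => hblock g jj]]
    have hb := block_sum_init (β := {j : {j' : Fin n // j' ≠ focal} // assign j.val = i})
      ((ps i).init) ((x i : ℕ))
    rw [card_blk focal assign ks hcard i] at hb
    exact hb

end Game2
section Game3

variable {n m : ℕ}

lemma row_sum (ps : Fin m → Mem1) (hps : ∀ i, (ps i).valid) (ks : Fin m → ℕ) (i0 : Fin m)
    (focal : Fin n) (assign : Fin n → Fin m) (hassign : assign focal = i0)
    (hcard : ∀ i, (Finset.univ.filter fun j => j ≠ focal ∧ assign j = i).card = ks i)
    (A : Bool) (x : (i : Fin m) → Fin (ks i + 1))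
    (A' : Bool) (x' : (i : Fin m) → Fin (ks i + 1))
    (h : FullState n) (hh : h ∈ clusterM focal assign ks A x) :
    ∑ h' ∈ clusterM focal assign ks A' x', fullM (stratM ps assign) h h'
      = redMM ps ks i0 (A, x) (A', x') := by
  have hnc : nCoop h = (∑ i, (x i : ℕ)) + (if A then 1 else 0) :=
    nCoop_cluster focal assign ks A x h hh
  rw [clusterM, Finset.mem_filter] at hh
  obtain ⟨-, hfA, hcnt⟩ := hh
  rw [clusterM, Finset.sum_filter]
  rw [Finset.sum_congr rfl fun h' _ => by
    rw [show fullM (stratM ps assign) h h' = ∏ j, rowW ps assign h j (h' j) from rfl]]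
  rw [decomp focal assign (rowW ps assign h) A' (fun i => (x' i : ℕ))]
  rw [redMM]
  congr 1
  · -- focal factor
    have hc : (stratM ps assign focal).cond (h focal) (nCoop h - if h focal then 1 else 0)
        = (ps i0).cond A (∑ i, (x i : ℕ)) := by
      rw [stratM, hassign, hfA, hnc, Nat.add_sub_cancel]
    rw [show rowW ps assign h focal A'
        = if A' then (stratM ps assign focal).cond (h focal) (nCoop h - if h focal then 1 else 0)
          else 1 - (stratM ps assign focal).cond (h focal) (nCoop h - if h focal then 1 else 0)
        from rfl, hc]
    obtain ⟨h0, h1⟩ := (hps i0).2 A (∑ i, (x i : ℕ))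
    by_cases hA' : A'
    · rw [if_pos hA', if_pos hA',
        show (1:ℝ) - 1 - (ps i0).cond A (∑ i, (x i : ℕ)) = -((ps i0).cond A (∑ i, (x i : ℕ)))
          by ring, abs_neg, abs_of_nonneg h0]
    · rw [if_neg hA', if_neg hA',
        show (1:ℝ) - 0 - (ps i0).cond A (∑ i, (x i : ℕ)) = 1 - (ps i0).cond A (∑ i, (x i : ℕ))
          by ring, abs_of_nonneg (by linarith)]
  · -- block factors
    refine Finset.prod_congr rfl fun i _ => ?_
    set pc := (ps i).cond true ((∑ i', (x i' : ℕ)) + (if A then 1 else 0) - 1) with hpc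
    set pd := (ps i).cond false ((∑ i', (x i' : ℕ)) + (if A then 1 else 0)) with hpd
    have hblock : ∀ g : {j : {j' : Fin n // j' ≠ focal} // assign j.val = i} → Bool, ∀ jj,
        rowW ps assign h jj.val.val (g jj)
          = (if g jj then (if h jj.val.val then pc else pd)
             else 1 - (if h jj.val.val then pc else pd)) := by
      intro g jj
      have hc : (stratM ps assign jj.val.val).cond (h jj.val.val)
          (nCoop h - if h jj.val.val then 1 else 0)
          = if h jj.val.val then pc else pd := by
        rw [stratM, jj.prop]
        rcases Bool.eq_false_or_eq_true (h jj.val.val) with hj | hj <;>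
          simp [hj, hnc, hpc, hpd]
      rw [show rowW ps assign h jj.val.val (g jj)
          = if g jj then (stratM ps assign jj.val.val).cond (h jj.val.val)
              (nCoop h - if h jj.val.val then 1 else 0)
            else 1 - (stratM ps assign jj.val.val).cond (h jj.val.val)
              (nCoop h - if h jj.val.val then 1 else 0) from rfl, hc]
    rw [Finset.sum_congr rfl fun g _ => by
      rw [show (∏ jj, rowW ps assign h jj.val.val (g jj))
          = ∏ jj, (if g jj then (if h jj.val.val then pc else pd)
              else 1 - (if h jj.val.val then pc else pd))
        from Finset.prod_congr rfl fun jj _ => hblock g jj]]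
    have hb := block_sum_transfer (β := {j : {j' : Fin n // j' ≠ focal} // assign j.val = i})
      (fun jj => h jj.val.val) pc pd ((x' i : ℕ))
    beta_reduce at hb
    rw [card_blk focal assign ks hcard i] at hb
    rw [show (Finset.univ.filter fun jj : {j : {j' : Fin n // j' ≠ focal} // assign j.val = i} =>
        h jj.val.val = true).card = (x i : ℕ) by
      exact (card_blk_filter focal assign i (fun j => h j = true)).trans (hcnt i)] at hb
    exact hb

end Game3
section Game4

variable {n m : ℕ}

lemma vecMul_apply {α : Type*} [Fintype α] (v : α → ℝ) (T : Matrix α α ℝ) (j : α) :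
    (v ᵥ* T) j = ∑ i, v i * T i j := by
  simp [Matrix.vecMul, dotProduct]

/-- The reduced state of a full state. -/
def redOf (focal : Fin n) (assign : Fin n → Fin m) (ks : Fin m → ℕ) (h : FullState n) :
    RStateM ks :=
  (h focal, fun i =>
    ⟨min ((Finset.univ.filter fun j => j ≠ focal ∧ assign j = i ∧ h j = true).card) (ks i),
      Nat.lt_succ_of_le (min_le_right _ _)⟩)

lemma cnt_le_ks (focal : Fin n) (assign : Fin n → Fin m) (ks : Fin m → ℕ)
    (hcard : ∀ i, (Finset.univ.filter fun j => j ≠ focal ∧ assign j = i).card = ks i)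
    (h : FullState n) (i : Fin m) :
    (Finset.univ.filter fun j => j ≠ focal ∧ assign j = i ∧ h j = true).card ≤ ks i := by
  rw [← hcard i]
  exact Finset.card_le_card
    (Finset.monotone_filter_right _ (fun j _ hj => ⟨hj.1, hj.2.1⟩))

lemma mem_cluster_redOf (focal : Fin n) (assign : Fin n → Fin m) (ks : Fin m → ℕ)
    (hcard : ∀ i, (Finset.univ.filter fun j => j ≠ focal ∧ assign j = i).card = ks i)
    (h : FullState n) :
    h ∈ clusterM focal assign ks (redOf focal assign ks h).1 (redOf focal assign ks h).2 := by
  rw [clusterM, Finset.mem_filter]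
  exact ⟨Finset.mem_univ _, rfl, fun i => by
    simp [redOf, min_eq_left (cnt_le_ks focal assign ks hcard h i)]⟩

lemma cluster_eq_fiber (focal : Fin n) (assign : Fin n → Fin m) (ks : Fin m → ℕ)
    (hcard : ∀ i, (Finset.univ.filter fun j => j ≠ focal ∧ assign j = i).card = ks i)
    (s : RStateM ks) :
    clusterM focal assign ks s.1 s.2
      = Finset.univ.filter (fun h => redOf focal assign ks h = s) := by
  ext h
  rw [clusterM, Finset.mem_filter, Finset.mem_filter]
  constructor
  · rintro ⟨-, h1, h2⟩
    refine ⟨Finset.mem_univ _, Prod.ext h1 ?_⟩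
    funext i
    apply Fin.ext
    simp only [redOf, h2 i]
    exact min_eq_left (Fin.is_le _)
  · rintro ⟨-, rfl⟩
    exact ⟨Finset.mem_univ _, rfl, fun i => by
      simp [redOf, min_eq_left (cnt_le_ks focal assign ks hcard h i)]⟩

lemma lump (ps : Fin m → Mem1) (hps : ∀ i, (ps i).valid) (ks : Fin m → ℕ) (i0 : Fin m)
    (focal : Fin n) (assign : Fin n → Fin m) (hassign : assign focal = i0)
    (hcard : ∀ i, (Finset.univ.filter fun j => j ≠ focal ∧ assign j = i).card = ks i)
    (t : ℕ) (s : RStateM ks) :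
    (redInitM ps ks i0 ᵥ* (redMM ps ks i0) ^ t) s
      = ∑ h ∈ clusterM focal assign ks s.1 s.2,
          (fullInit (stratM ps assign) ᵥ* (fullM (stratM ps assign)) ^ t) h := by
  induction t generalizing s with
  | zero =>
    simp only [pow_zero, Matrix.vecMul_one]
    obtain ⟨A, x⟩ := s
    exact (init_lump ps hps ks i0 focal assign hassign hcard A x).symm
  | succ t ih =>
    obtain ⟨A', x'⟩ := s
    rw [pow_succ, pow_succ, ← Matrix.vecMul_vecMul, ← Matrix.vecMul_vecMul]
    set w := fullInit (stratM ps assign) ᵥ* (fullM (stratM ps assign)) ^ t with hwdef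
    have key : ∑ h' ∈ clusterM focal assign ks A' x', (w ᵥ* fullM (stratM ps assign)) h'
        = ∑ s : RStateM ks, (∑ h ∈ clusterM focal assign ks s.1 s.2, w h)
            * redMM ps ks i0 s (A', x') := by
      calc ∑ h' ∈ clusterM focal assign ks A' x', (w ᵥ* fullM (stratM ps assign)) h'
          = ∑ h' ∈ clusterM focal assign ks A' x', ∑ h, w h * fullM (stratM ps assign) h h' :=
            Finset.sum_congr rfl fun h' _ => _root_.vecMul_apply _ _ h'
        _ = ∑ h, ∑ h' ∈ clusterM focal assign ks A' x', w h * fullM (stratM ps assign) h h' :=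
            Finset.sum_comm
        _ = ∑ h, w h * ∑ h' ∈ clusterM focal assign ks A' x', fullM (stratM ps assign) h h' :=
            Finset.sum_congr rfl fun h _ => (Finset.mul_sum _ _ _).symm
        _ = ∑ h, w h * redMM ps ks i0 (redOf focal assign ks h) (A', x') :=
            Finset.sum_congr rfl fun h _ => by
              rw [row_sum ps hps ks i0 focal assign hassign hcard _ _ A' x' h
                (mem_cluster_redOf focal assign ks hcard h)]
        _ = ∑ s : RStateM ks, ∑ h ∈ Finset.univ.filter (fun h => redOf focal assign ks h = s),
              w h * redMM ps ks i0 (redOf focal assign ks h) (A', x') :=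
            (Finset.sum_fiberwise Finset.univ (redOf focal assign ks) _).symm
        _ = ∑ s : RStateM ks, (∑ h ∈ clusterM focal assign ks s.1 s.2, w h)
              * redMM ps ks i0 s (A', x') := by
            refine Finset.sum_congr rfl fun s _ => ?_
            rw [Finset.sum_congr rfl fun h hh => by
              rw [(Finset.mem_filter.mp hh).2]]
            rw [← Finset.sum_mul, ← cluster_eq_fiber focal assign ks hcard s]
    rw [key, _root_.vecMul_apply]
    exact Finset.sum_congr rfl fun s _ => by rw [ih s]
end Game4
section Game5

variable {n m : ℕ}

lemma sum_prod_bool (c : Fin n → ℝ) :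
    ∑ f : Fin n → Bool, ∏ j, (if f j then c j else 1 - c j) = 1 := by
  have h := Finset.prod_univ_sum (fun _ : Fin n => (Finset.univ : Finset Bool))
    (fun j b => if b then c j else 1 - c j)
  rw [Fintype.piFinset_univ] at h
  rw [← h]
  have : ∀ j : Fin n, ∑ b : Bool, (if b then c j else 1 - c j) = 1 := by
    intro j; rw [Fintype.sum_bool]; ring_nf; simp
  rw [Finset.prod_congr rfl fun j _ => this j, Finset.prod_const_one]

lemma fullM_rowsum (strat : Fin n → Mem1) (h : FullState n) :
    ∑ h' : FullState n, fullM strat h h' = 1 :=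
  sum_prod_bool _

lemma fullM_nonneg (strat : Fin n → Mem1) (hstrat : ∀ j, (strat j).valid)
    (h h' : FullState n) : 0 ≤ fullM strat h h' := by
  show (0:ℝ) ≤ ∏ j, (if h' j then (strat j).cond (h j) (nCoop h - if h j then 1 else 0)
    else 1 - (strat j).cond (h j) (nCoop h - if h j then 1 else 0))
  refine Finset.prod_nonneg fun j _ => ?_
  obtain ⟨h0, h1⟩ := (hstrat j).2 (h j) (nCoop h - if h j then 1 else 0)
  by_cases hb : h' j
  · rw [if_pos hb]; exact h0
  · rw [if_neg hb]; linarith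

lemma fullInit_nonneg (strat : Fin n → Mem1) (h : FullState n) : 0 ≤ fullInit strat h := by
  show (0:ℝ) ≤ ∏ j, |1 - (if h j then (1:ℝ) else 0) - (strat j).init|
  exact Finset.prod_nonneg fun j _ => abs_nonneg _

lemma fullInit_sum (strat : Fin n → Mem1) (hstrat : ∀ j, (strat j).valid) :
    ∑ h : FullState n, fullInit strat h = 1 := by
  have heq : ∀ h : FullState n, fullInit strat h
      = ∏ j, (if h j then (strat j).init else 1 - (strat j).init) := by
    intro h
    refine Finset.prod_congr rfl fun j _ => ?_
    obtain ⟨h0, h1⟩ := (hstrat j).1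
    by_cases hb : h j
    · rw [if_pos hb, if_pos hb,
        show (1:ℝ) - 1 - (strat j).init = -((strat j).init) by ring, abs_neg, abs_of_nonneg h0]
    · rw [if_neg hb, if_neg hb,
        show (1:ℝ) - 0 - (strat j).init = 1 - (strat j).init by ring,
        abs_of_nonneg (by linarith)]
  rw [Finset.sum_congr rfl fun h _ => heq h]
  exact sum_prod_bool _

lemma iter_nonneg_sum_one (strat : Fin n → Mem1) (hstrat : ∀ j, (strat j).valid) (t : ℕ) :
    (∀ h, 0 ≤ (fullInit strat ᵥ* (fullM strat) ^ t) h)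
      ∧ (∑ h, (fullInit strat ᵥ* (fullM strat) ^ t) h) = 1 := by
  induction t with
  | zero =>
    simp only [pow_zero, Matrix.vecMul_one]
    exact ⟨fullInit_nonneg strat, fullInit_sum strat hstrat⟩
  | succ t ih =>
    rw [pow_succ, ← Matrix.vecMul_vecMul]
    constructor
    · intro h'
      rw [_root_.vecMul_apply]
      exact Finset.sum_nonneg fun h _ =>
        mul_nonneg (ih.1 h) (fullM_nonneg strat hstrat h h')
    · rw [Finset.sum_congr rfl fun h' _ => _root_.vecMul_apply _ _ h', Finset.sum_comm]
      simp_rw [← Finset.mul_sum]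
      rw [Finset.sum_congr rfl fun h _ => by rw [fullM_rowsum strat h, mul_one]]
      exact ih.2

lemma iter_abs_le_one (strat : Fin n → Mem1) (hstrat : ∀ j, (strat j).valid) (t : ℕ)
    (h : FullState n) : |(fullInit strat ᵥ* (fullM strat) ^ t) h| ≤ 1 := by
  obtain ⟨hpos, hsum⟩ := iter_nonneg_sum_one strat hstrat t
  rw [abs_of_nonneg (hpos h)]
  calc (fullInit strat ᵥ* (fullM strat) ^ t) h
      ≤ ∑ h', (fullInit strat ᵥ* (fullM strat) ^ t) h' :=
        Finset.single_le_sum (fun h' _ => hpos h') (Finset.mem_univ h)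
    _ = 1 := hsum

lemma payoff_cluster (focal : Fin n) (assign : Fin n → Fin m) (ks : Fin m → ℕ)
    (a b : ℕ → ℝ) (A : Bool) (x : (i : Fin m) → Fin (ks i + 1)) (h : FullState n)
    (hh : h ∈ clusterM focal assign ks A x) :
    focalPayoff focal a b h = if A then a (∑ i, (x i : ℕ)) else b (∑ i, (x i : ℕ)) := by
  have hnc := nCoop_cluster focal assign ks A x h hh
  rw [clusterM, Finset.mem_filter] at hh
  obtain ⟨-, hfA, -⟩ := hh
  rw [focalPayoff, hfA, hnc]
  by_cases hA : A
  · rw [if_pos hA, if_pos hA, if_pos hA, Nat.add_sub_cancel]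
  · rw [if_neg hA, if_neg hA, if_neg hA, Nat.add_zero]

lemma termwise (ps : Fin m → Mem1) (hps : ∀ i, (ps i).valid) (ks : Fin m → ℕ) (i0 : Fin m)
    (focal : Fin n) (assign : Fin n → Fin m) (hassign : assign focal = i0)
    (hcard : ∀ i, (Finset.univ.filter fun j => j ≠ focal ∧ assign j = i).card = ks i)
    (a b : ℕ → ℝ) (t : ℕ) :
    ∑ h, (fullInit (stratM ps assign) ᵥ* (fullM (stratM ps assign)) ^ t) h
        * focalPayoff focal a b h
      = ∑ s : RStateM ks, (redInitM ps ks i0 ᵥ* (redMM ps ks i0) ^ t) s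
          * (if s.1 then a (∑ i, (s.2 i : ℕ)) else b (∑ i, (s.2 i : ℕ))) := by
  rw [← Finset.sum_fiberwise Finset.univ (redOf focal assign ks)
    (fun h => (fullInit (stratM ps assign) ᵥ* (fullM (stratM ps assign)) ^ t) h
      * focalPayoff focal a b h)]
  refine Finset.sum_congr rfl fun s _ => ?_
  rw [← cluster_eq_fiber focal assign ks hcard s]
  rw [Finset.sum_congr rfl fun h hh => by
    rw [payoff_cluster focal assign ks a b s.1 s.2 h hh]]
  rw [← Finset.sum_mul, ← lump ps hps ks i0 focal assign hassign hcard t s]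

lemma disc_sum_eq {α : Type*} [Fintype α] [DecidableEq α] (δ : ℝ) (hδ0 : 0 ≤ δ) (hδ1 : δ < 1)
    (w0 : α → ℝ) (T : Matrix α α ℝ) (φ : α → ℝ) (hb : ∀ t j, |(w0 ᵥ* T ^ t) j| ≤ 1) :
    ∑ j, discMean δ w0 T j * φ j
      = ∑' t : ℕ, ∑ j, ((1 - δ) * δ ^ t * (w0 ᵥ* T ^ t) j * φ j) := by
  have hsummable : ∀ j : α, Summable (fun t : ℕ => (1 - δ) * δ ^ t * (w0 ᵥ* T ^ t) j * φ j) := by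
    intro j
    refine Summable.of_norm_bounded (g := fun t => δ ^ t * (|1 - δ| * |φ j|))
      ((summable_geometric_of_lt_one hδ0 hδ1).mul_right _) fun t => ?_
    have hδt : (0:ℝ) ≤ δ ^ t := pow_nonneg hδ0 t
    have h1 := hb t j
    calc ‖(1 - δ) * δ ^ t * (w0 ᵥ* T ^ t) j * φ j‖
        = |1 - δ| * δ ^ t * |(w0 ᵥ* T ^ t) j| * |φ j| := by
          rw [Real.norm_eq_abs, abs_mul, abs_mul, abs_mul, abs_of_nonneg hδt]
      _ ≤ |1 - δ| * δ ^ t * 1 * |φ j| := by gcongr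
      _ = δ ^ t * (|1 - δ| * |φ j|) := by ring
  calc ∑ j, discMean δ w0 T j * φ j
      = ∑ j, ∑' t : ℕ, (1 - δ) * δ ^ t * (w0 ᵥ* T ^ t) j * φ j := by
        refine Finset.sum_congr rfl fun j _ => ?_
        rw [discMean, mul_assoc, ← tsum_mul_right, ← tsum_mul_left]
        exact tsum_congr fun t => by ring
    _ = ∑' t : ℕ, ∑ j, (1 - δ) * δ ^ t * (w0 ᵥ* T ^ t) j * φ j :=
        (Summable.tsum_finsetSum fun j _ => hsummable j).symm

end Game5
/-- With `m` strategies, the focal player's discounted long-term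
payoff computed from the full chain equals that computed from the reduced chain. -/
theorem payoff_full_eq_reduced_discounted_m (n m : ℕ) (hn : 2 ≤ n) (hm : 1 ≤ m)
    (ps : Fin m → Mem1) (hps : ∀ i, (ps i).valid)
    (ks : Fin m → ℕ) (hks : ∑ i, ks i = n - 1) (i0 : Fin m)
    (focal : Fin n) (hfocal : (focal : ℕ) = 0)
    (assign : Fin n → Fin m) (hassign : assign focal = i0)
    (hcard : ∀ i, (Finset.univ.filter fun j => j ≠ focal ∧ assign j = i).card = ks i)
    (δ : ℝ) (hδ0 : 0 < δ) (hδ1 : δ < 1) (a b : ℕ → ℝ) :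
    ∑ h : FullState n,
        discMean δ (fullInit (stratM ps assign)) (fullM (stratM ps assign)) h *
          focalPayoff focal a b h
      = ∑ x : (i : Fin m) → Fin (ks i + 1),
          (discMean δ (redInitM ps ks i0) (redMM ps ks i0) (true, x) * a (∑ i, (x i : ℕ))
           + discMean δ (redInitM ps ks i0) (redMM ps ks i0) (false, x) * b (∑ i, (x i : ℕ))) := by
  have hvalid : ∀ j, (stratM ps assign j).valid := fun j => hps (assign j)
  have hfull : ∀ (t : ℕ) (h : FullState n),
      |(fullInit (stratM ps assign) ᵥ* (fullM (stratM ps assign)) ^ t) h| ≤ 1 :=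
    fun t h => iter_abs_le_one _ hvalid t h
  have hred : ∀ (t : ℕ) (s : RStateM ks),
      |(redInitM ps ks i0 ᵥ* (redMM ps ks i0) ^ t) s| ≤ 1 := by
    intro t s
    rw [lump ps hps ks i0 focal assign hassign hcard t s]
    obtain ⟨hpos, hsum⟩ := iter_nonneg_sum_one _ hvalid t
    rw [abs_of_nonneg (Finset.sum_nonneg fun h _ => hpos h)]
    calc ∑ h ∈ clusterM focal assign ks s.1 s.2,
          (fullInit (stratM ps assign) ᵥ* (fullM (stratM ps assign)) ^ t) h
        ≤ ∑ h, (fullInit (stratM ps assign) ᵥ* (fullM (stratM ps assign)) ^ t) h :=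
          Finset.sum_le_univ_sum_of_nonneg hpos
      _ = 1 := hsum
  rw [disc_sum_eq δ hδ0.le hδ1 _ _ (focalPayoff focal a b) hfull]
  have hRHS : (∑ x : (i : Fin m) → Fin (ks i + 1),
        (discMean δ (redInitM ps ks i0) (redMM ps ks i0) (true, x) * a (∑ i, (x i : ℕ))
         + discMean δ (redInitM ps ks i0) (redMM ps ks i0) (false, x) * b (∑ i, (x i : ℕ))))
      = ∑ s : RStateM ks, discMean δ (redInitM ps ks i0) (redMM ps ks i0) s
          * (if s.1 then a (∑ i, (s.2 i : ℕ)) else b (∑ i, (s.2 i : ℕ))) := by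
    rw [Fintype.sum_prod_type_right]
    refine Finset.sum_congr rfl fun x _ => ?_
    rw [Fintype.sum_bool]
    simp
  rw [hRHS, disc_sum_eq δ hδ0.le hδ1 _ _ _ hred]
  refine tsum_congr fun t => ?_
  rw [Finset.sum_congr rfl fun h _ => show
      (1 - δ) * δ ^ t * (fullInit (stratM ps assign) ᵥ* (fullM (stratM ps assign)) ^ t) h
        * focalPayoff focal a b h
      = ((1 - δ) * δ ^ t) * ((fullInit (stratM ps assign) ᵥ* (fullM (stratM ps assign)) ^ t) h
        * focalPayoff focal a b h) by ring,
    ← Finset.mul_sum, termwise ps hps ks i0 focal assign hassign hcard a b t, Finset.mul_sum]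
  exact Finset.sum_congr rfl fun s _ => by ring
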